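/- For a submodular set function f with f(∅) = 0, the minimum of f over subsets of S equals the minimum of f_lv over {0,1}^|S|, and any minimizer x* of f_lv over [0,1]^|S| yields, for each threshold t ∈ (0,1], a minimizing set A_t = {s_i : x*(i) ≥ t} of f. -/

import Mathlib

set_option maxRecDepth 4000

open MeasureTheory intervalIntegral Set

/-- The Lovász extension of a set function, via the threshold (level-set) formula,
which agrees with the greedy sorting formula for `x ∈ [0,1]^m` when `f ∅ = 0`. -/
noncomputable def lovasz {m : ℕ} (f : Finset (Fin m) → ℝ) (x : Fin m → ℝ) : ℝ :=
  ∫ t in (0:ℝ)..1, f (Finset.univ.filter fun i => t ≤ x i)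

namespace LovaszAux

variable {m : ℕ} (f : Finset (Fin m) → ℝ)

/-- indicator vector -/
noncomputable def chi (A : Finset (Fin m)) : Fin m → ℝ := fun i => if i ∈ A then 1 else 0

lemma measurable_level (xs : Fin m → ℝ) (A : Finset (Fin m)) :
    MeasurableSet {s : ℝ | (Finset.univ.filter fun i => s ≤ xs i) = A} := by
  have h : {s : ℝ | (Finset.univ.filter fun i => s ≤ xs i) = A}
      = ⋂ i : Fin m, {s : ℝ | s ≤ xs i ↔ i ∈ A} := by
    ext s
    constructor
    · intro h
      refine Set.mem_iInter.2 fun i => ?_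
      simp only [Set.mem_setOf_eq]
      rw [← h]
      simp only [Finset.mem_filter, Finset.mem_univ, true_and]
    · intro h
      have h' := Set.mem_iInter.1 h
      show (Finset.univ.filter fun i => s ≤ xs i) = A
      ext i
      simp only [Finset.mem_filter, Finset.mem_univ, true_and]
      exact h' i
  rw [h]
  refine MeasurableSet.iInter fun i => ?_
  by_cases hi : i ∈ A
  · have : {s : ℝ | s ≤ xs i ↔ i ∈ A} = Iic (xs i) := by
      ext s; simp only [Set.mem_setOf_eq, hi, iff_true, Set.mem_Iic]
    rw [this]; exact measurableSet_Iic
  · have : {s : ℝ | s ≤ xs i ↔ i ∈ A} = Ioi (xs i) := by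
      ext s; simp only [Set.mem_setOf_eq, hi, iff_false, Set.mem_Ioi, not_le]
    rw [this]; exact measurableSet_Ioi

lemma measurable_g (xs : Fin m → ℝ) :
    Measurable (fun s : ℝ => f (Finset.univ.filter fun i => s ≤ xs i)) := by
  have h : (fun s : ℝ => f (Finset.univ.filter fun i => s ≤ xs i))
      = fun s => ∑ A : Finset (Fin m),
          Set.indicator {s : ℝ | (Finset.univ.filter fun i => s ≤ xs i) = A} (fun _ => f A) s := by
    funext s
    have hA : ∀ A : Finset (Fin m),
        Set.indicator {s : ℝ | (Finset.univ.filter fun i => s ≤ xs i) = A} (fun _ => f A) s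
          = if (Finset.univ.filter fun i => s ≤ xs i) = A then f A else 0 := fun A => by
      simp [Set.indicator]
    simp only [hA]
    rw [Finset.sum_ite_eq]
    simp
  rw [h]
  exact Finset.measurable_sum _ fun A _ =>
    (measurable_const.indicator (measurable_level xs A))

lemma intInt (xs : Fin m → ℝ) (a b : ℝ) :
    IntervalIntegrable (fun s : ℝ => f (Finset.univ.filter fun i => s ≤ xs i)) volume a b := by
  rw [intervalIntegrable_iff]
  refine Integrable.mono' ((integrableOn_const_iff (C := ∑ A : Finset (Fin m), |f A|)).2 (Or.inr measure_Ioc_lt_top))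
    ((measurable_g f xs).aestronglyMeasurable) ?_
  refine Filter.Eventually.of_forall fun s => ?_
  calc |f (Finset.univ.filter fun i => s ≤ xs i)|
      ≤ ∑ A : Finset (Fin m), |f A| :=
        Finset.single_le_sum (fun A _ => abs_nonneg (f A)) (Finset.mem_univ _)
    _ = _ := rfl

lemma integral_congr_Ioc {a b : ℝ} (hab : a ≤ b) {g h : ℝ → ℝ}
    (hgh : ∀ s ∈ Set.Ioc a b, g s = h s) :
    ∫ s in a..b, g s = ∫ s in a..b, h s := by
  rw [intervalIntegral.integral_of_le hab, intervalIntegral.integral_of_le hab]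
  exact setIntegral_congr_fun measurableSet_Ioc hgh

lemma lovasz_chi (A : Finset (Fin m)) : lovasz f (chi A) = f A := by
  unfold lovasz
  have h : ∀ s ∈ Set.Ioc (0:ℝ) 1,
      f (Finset.univ.filter fun i => s ≤ chi A i) = f A := by
    intro s hs
    congr 1
    ext i
    by_cases hi : i ∈ A <;> simp only [Finset.mem_filter, Finset.mem_univ, true_and] <;> simp [chi, hi, hs.2, not_le.2 hs.1]
  rw [integral_congr_Ioc zero_le_one h, intervalIntegral.integral_const]
  simp

end LovaszAux

theorem min_submodular_vertices_and_thresholds {m : ℕ} (f : Finset (Fin m) → ℝ)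
    (hf : ∀ A B : Finset (Fin m), f (A ∩ B) + f (A ∪ B) ≤ f A + f B)
    (h0 : f ∅ = 0) :
    sInf (Set.range f) =
      sInf (lovasz f '' {x : Fin m → ℝ | ∀ i, x i = 0 ∨ x i = 1}) ∧
    ∀ xs : Fin m → ℝ, (∀ i, xs i ∈ Set.Icc (0:ℝ) 1) →
      (∀ y : Fin m → ℝ, (∀ i, y i ∈ Set.Icc (0:ℝ) 1) → lovasz f xs ≤ lovasz f y) →
      ∀ t : ℝ, 0 < t → t ≤ 1 →
        ∀ A : Finset (Fin m), f (Finset.univ.filter fun i => t ≤ xs i) ≤ f A := by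
  constructor
  · congr 1
    ext r
    constructor
    · rintro ⟨A, rfl⟩
      exact ⟨LovaszAux.chi A,
        fun i => by by_cases hi : i ∈ A <;> simp [LovaszAux.chi, hi],
        LovaszAux.lovasz_chi f A⟩
    · rintro ⟨x, hx, rfl⟩
      refine ⟨Finset.univ.filter fun i => x i = 1, ?_⟩
      have hxe : x = LovaszAux.chi (Finset.univ.filter fun i => x i = 1) := by
        funext i
        rcases hx i with h | h <;> simp [LovaszAux.chi, Finset.mem_filter, h]
      conv_rhs => rw [hxe]
      rw [LovaszAux.lovasz_chi]
  · intro xs hxs hmin t ht ht1 A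
    obtain ⟨B, -, hB⟩ := Finset.exists_min_image Finset.univ f ⟨∅, Finset.mem_univ ∅⟩
    have hB' : ∀ C : Finset (Fin m), f B ≤ f C := fun C => hB C (Finset.mem_univ C)
    have hlov : lovasz f xs ≤ f B := by
      have := hmin (LovaszAux.chi B)
        (fun i => by by_cases hi : i ∈ B <;> simp [LovaszAux.chi, hi])
      rwa [LovaszAux.lovasz_chi] at this
    set T := insert (0:ℝ) ((Finset.univ.filter fun i => xs i < t).image xs) with hT
    have hTne : T.Nonempty := ⟨0, Finset.mem_insert_self _ _⟩
    set c := T.max' hTne with hc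
    have hc0 : 0 ≤ c := Finset.le_max' T 0 (Finset.mem_insert_self _ _)
    have hct : c < t := by
      have hmem := Finset.max'_mem T hTne
      rcases Finset.mem_insert.1 hmem with h | h
      · rw [← hc] at h; rw [h]; exact ht
      · obtain ⟨i, hi, hxi⟩ := Finset.mem_image.1 h
        have hlt := (Finset.mem_filter.1 hi).2
        rw [← hc] at hxi; rw [← hxi]; exact hlt
    have hconst : ∀ s ∈ Set.Ioc c t,
        (Finset.univ.filter fun i => s ≤ xs i)
          = (Finset.univ.filter fun i => t ≤ xs i) := by
      intro s hs
      ext i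
      simp only [Finset.mem_filter, Finset.mem_univ, true_and]
      constructor
      · intro hsx
        by_contra hti
        push_neg at hti
        have hmem : xs i ∈ T := Finset.mem_insert_of_mem
          (Finset.mem_image_of_mem xs (Finset.mem_filter.2 ⟨Finset.mem_univ i, hti⟩))
        have hle : xs i ≤ c := Finset.le_max' T _ hmem
        linarith [hs.1]
      · intro hti; exact hs.2.trans hti
    set g := fun s : ℝ => f (Finset.univ.filter fun i => s ≤ xs i) with hg
    have hint : ∀ a b : ℝ, IntervalIntegrable g volume a b := LovaszAux.intInt f xs
    have e1 : (∫ s in (0:ℝ)..t, g s) + ∫ s in t..1, g s = ∫ s in (0:ℝ)..1, g s :=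
      intervalIntegral.integral_add_adjacent_intervals (hint 0 t) (hint t 1)
    have e2 : (∫ s in (0:ℝ)..c, g s) + ∫ s in c..t, g s = ∫ s in (0:ℝ)..t, g s :=
      intervalIntegral.integral_add_adjacent_intervals (hint 0 c) (hint c t)
    have hlov' : lovasz f xs = ∫ s in (0:ℝ)..1, g s := rfl
    have lb1 : c * f B ≤ ∫ s in (0:ℝ)..c, g s := by
      have := intervalIntegral.integral_mono_on hc0 (_root_.intervalIntegrable_const (c := f B))
        (hint 0 c) (fun s _ => hB' _)
      simpa using this
    have lb3 : (1 - t) * f B ≤ ∫ s in t..1, g s := by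
      have := intervalIntegral.integral_mono_on ht1 (_root_.intervalIntegrable_const (c := f B))
        (hint t 1) (fun s _ => hB' _)
      simpa using this
    have eq2 : (∫ s in c..t, g s)
        = (t - c) * f (Finset.univ.filter fun i => t ≤ xs i) := by
      rw [LovaszAux.integral_congr_Ioc hct.le
        (fun s hs => by simp only [hg]; rw [hconst s hs])]
      simp [smul_eq_mul]
    have key : (t - c) * f (Finset.univ.filter fun i => t ≤ xs i) ≤ (t - c) * f B := by
      rw [hlov', ← e1, ← e2, eq2] at hlov
      linarith
    exact le_trans ((mul_le_mul_iff_right₀ (sub_pos.2 hct)).1 key) (hB' A)
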